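/- arXiv:2408.14476 — 12 statements merged into one kernel-verified Lean document; each statement's English description precedes it below -/
import Mathlib

section
/- Consider an individual with skill n > 0 facing the piecewise-linear tax t with parameters α ≥ 0, β1, β2 ∈ (0,1], kink y1 > 0, in the concave case β1 ≤ β2. If 0 < n ≤ n3 = √(2y1/(β1+β2)), then the function l ↦ u(nl − t(nl), l) = (nl − t(nl)) − l²/2 attains its maximum over l ≥ 0 at l = β1·n, the maximal utility value equals α + β1²n²/2, and the tax paid at the optimum equals −α + (1−β1)β1n². -/
open MeasureTheory Set

/-- Piecewise-linear two-bracket tax with subsidy `α`, retained proportions `β1, β2`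
and kink point `y1`. -/
noncomputable def tax (α β1 β2 y1 y : ℝ) : ℝ :=
  if y ≤ y1 then -α + (1 - β1) * y
  else -α + (1 - β1) * y1 + (1 - β2) * (y - y1)

/-- Concave case `β1 ≤ β2`, `0 < n ≤ n3 = √(2 y1 / (β1 + β2))`: the optimal effort is
`β1 n`, the maximal utility is `α + β1² n² / 2`, and the tax paid is
`-α + (1 - β1) β1 n²`. -/
theorem stmt0 (α β1 β2 y1 n : ℝ)
    (hα : 0 ≤ α) (hβ1 : β1 ∈ Set.Ioc (0:ℝ) 1) (hβ2 : β2 ∈ Set.Ioc (0:ℝ) 1)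
    (hy1 : 0 < y1) (hcase : β1 ≤ β2) (hn : 0 < n)
    (hn3 : n ≤ Real.sqrt (2 * y1 / (β1 + β2))) :
    IsMaxOn (fun l => (n * l - tax α β1 β2 y1 (n * l)) - l ^ 2 / 2) (Set.Ici 0) (β1 * n) ∧
    (n * (β1 * n) - tax α β1 β2 y1 (n * (β1 * n))) - (β1 * n) ^ 2 / 2
      = α + β1 ^ 2 * n ^ 2 / 2 ∧
    tax α β1 β2 y1 (n * (β1 * n)) = -α + (1 - β1) * β1 * n ^ 2 := by
  obtain ⟨hb1, hb1'⟩ := hβ1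
  obtain ⟨hb2, hb2'⟩ := hβ2
  have hsum : 0 < β1 + β2 := by linarith
  have hkey : (β1 + β2) * n ^ 2 ≤ 2 * y1 := by
    have h1 : n ^ 2 ≤ Real.sqrt (2 * y1 / (β1 + β2)) ^ 2 := by
      apply pow_le_pow_left₀ hn.le hn3
    rw [Real.sq_sqrt (by positivity)] at h1
    rw [le_div_iff₀ hsum] at h1
    nlinarith
  have hle : n * (β1 * n) ≤ y1 := by nlinarith
  have htax : tax α β1 β2 y1 (n * (β1 * n)) = -α + (1 - β1) * β1 * n ^ 2 := by
    rw [tax, if_pos hle]; ring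
  refine ⟨?_, by rw [htax]; ring, htax⟩
  intro l hl
  simp only [Set.mem_setOf_eq, htax]
  rw [tax]
  split_ifs with h
  · nlinarith [sq_nonneg (l - β1 * n)]
  · nlinarith [sq_nonneg (l - β2 * n)]
end

section
/- Consider an individual with skill n > 0 facing the piecewise-linear tax t with parameters α ≥ 0, β1, β2 ∈ (0,1], kink y1 > 0, in the concave case β1 ≤ β2. If n ≥ n3 = √(2y1/(β1+β2)), then the function l ↦ u(nl − t(nl), l) = (nl − t(nl)) − l²/2 attains its maximum over l ≥ 0 at l = β2·n, the maximal utility value equals α + β2²n²/2 − y1(β2−β1), and the tax paid at the optimum equals −α + (1−β2)β2n² + (β2−β1)y1. -/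
open MeasureTheory Set

/-- Concave case `β1 ≤ β2`, `n ≥ n3 = √(2 y1 / (β1 + β2))`: the optimal effort is `β2 n`,
the maximal utility is `α + β2² n² / 2 - y1 (β2 - β1)`, and the tax paid is
`-α + (1 - β2) β2 n² + (β2 - β1) y1`. -/
theorem stmt1 (α β1 β2 y1 n : ℝ)
    (hα : 0 ≤ α) (hβ1 : β1 ∈ Set.Ioc (0:ℝ) 1) (hβ2 : β2 ∈ Set.Ioc (0:ℝ) 1)
    (hy1 : 0 < y1) (hcase : β1 ≤ β2) (hn : 0 < n)
    (hn3 : Real.sqrt (2 * y1 / (β1 + β2)) ≤ n) :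
    IsMaxOn (fun l => (n * l - tax α β1 β2 y1 (n * l)) - l ^ 2 / 2) (Set.Ici 0) (β2 * n) ∧
    (n * (β2 * n) - tax α β1 β2 y1 (n * (β2 * n))) - (β2 * n) ^ 2 / 2
      = α + β2 ^ 2 * n ^ 2 / 2 - y1 * (β2 - β1) ∧
    tax α β1 β2 y1 (n * (β2 * n)) = -α + (1 - β2) * β2 * n ^ 2 + (β2 - β1) * y1 := by

  obtain ⟨hb1, hb1'⟩ := hβ1
  obtain ⟨hb2, hb2'⟩ := hβ2
  have hsum : 0 < β1 + β2 := by linarith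
  have hx : 2 * y1 / (β1 + β2) ≤ n ^ 2 := by
    nlinarith [Real.sq_sqrt (show (0:ℝ) ≤ 2*y1/(β1+β2) by positivity),
      Real.sqrt_nonneg (2*y1/(β1+β2))]
  have hkey2 : 2 * y1 ≤ (β1 + β2) * n ^ 2 := by
    rw [div_le_iff₀ hsum] at hx; nlinarith
  have hkey : y1 ≤ β2 * n ^ 2 := by nlinarith
  have htaxopt : tax α β1 β2 y1 (n * (β2 * n)) = -α + (1 - β2) * β2 * n ^ 2 + (β2 - β1) * y1 := by
    unfold tax
    split_ifs with h
    · have heq : y1 = β2 * n ^ 2 := le_antisymm hkey (by nlinarith)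
      rw [heq]; ring
    · ring
  refine ⟨?_, ?_, htaxopt⟩
  · rw [isMaxOn_iff]
    intro l hl
    simp only [Set.mem_Ici] at hl
    simp only [htaxopt]
    unfold tax
    split_ifs with h
    · nlinarith [sq_nonneg (l - β1*n), sq_nonneg (l - β2*n),
        mul_nonneg (sub_nonneg.mpr hcase) (show (0:ℝ) ≤ (β1+β2)*n^2 - 2*y1 by linarith)]
    · push_neg at h
      nlinarith [sq_nonneg (l - β2*n)]
  · rw [htaxopt]; ring
end

section
/- Consider an individual with skill n > 0 facing the piecewise-linear tax t with parameters α ≥ 0, β1, β2 ∈ (0,1], kink y1 > 0, in the convex case β1 ≥ β2. If 0 < n < n1 = √(y1/β1), then the function l ↦ u(nl − t(nl), l) = (nl − t(nl)) − l²/2 attains its maximum over l ≥ 0 at l = β1·n, the maximal utility value equals α + β1²n²/2, and the tax paid at the optimum equals −α + (1−β1)β1n². -/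
open MeasureTheory Set

/-- Convex case `β1 ≥ β2`, `0 < n < n1 = √(y1 / β1)`: the optimal effort is `β1 n`,
the maximal utility is `α + β1² n² / 2`, and the tax paid is `-α + (1 - β1) β1 n²`. -/
theorem stmt2 (α β1 β2 y1 n : ℝ)
    (hα : 0 ≤ α) (hβ1 : β1 ∈ Set.Ioc (0:ℝ) 1) (hβ2 : β2 ∈ Set.Ioc (0:ℝ) 1)
    (hy1 : 0 < y1) (hcase : β2 ≤ β1) (hn : 0 < n)
    (hn1 : n < Real.sqrt (y1 / β1)) :
    IsMaxOn (fun l => (n * l - tax α β1 β2 y1 (n * l)) - l ^ 2 / 2) (Set.Ici 0) (β1 * n) ∧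
    (n * (β1 * n) - tax α β1 β2 y1 (n * (β1 * n))) - (β1 * n) ^ 2 / 2
      = α + β1 ^ 2 * n ^ 2 / 2 ∧
    tax α β1 β2 y1 (n * (β1 * n)) = -α + (1 - β1) * β1 * n ^ 2 := by
  obtain ⟨hb1, hb1'⟩ := hβ1
  obtain ⟨hb2, hb2'⟩ := hβ2
  have hsq : n ^ 2 < y1 / β1 := (Real.lt_sqrt hn.le).mp hn1
  have hkey : β1 * n ^ 2 < y1 := by
    nlinarith [(lt_div_iff₀ hb1).mp hsq]
  have htax : tax α β1 β2 y1 (n * (β1 * n)) = -α + (1 - β1) * β1 * n ^ 2 := by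
    unfold tax
    rw [if_pos (by nlinarith)]
    ring
  refine ⟨?_, by rw [htax]; ring, htax⟩
  intro l hl
  simp only [Set.mem_Ici] at hl
  simp only [Set.mem_setOf_eq, htax]
  unfold tax
  by_cases h : n * l ≤ y1
  · rw [if_pos h]; nlinarith [sq_nonneg (l - β1 * n)]
  · rw [if_neg h]
    push_neg at h
    nlinarith [sq_nonneg (l - β1 * n), mul_nonneg (sub_nonneg.mpr hcase) (le_of_lt (hy1.trans h))]
end

section
/- Consider an individual with skill n > 0 facing the piecewise-linear tax t with parameters α ≥ 0, β1, β2 ∈ (0,1], kink y1 > 0, in the convex case β1 ≥ β2. If n ≥ n2 = √(y1/β2), then the function l ↦ u(nl − t(nl), l) = (nl − t(nl)) − l²/2 attains its maximum over l ≥ 0 at l = β2·n, the maximal utility value equals α + β2²n²/2 − y1(β2−β1), and the tax paid at the optimum equals −α + (1−β2)β2n² + (β2−β1)y1. -/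
open MeasureTheory Set

/-- Convex case `β1 ≥ β2`, `n ≥ n2 = √(y1 / β2)`: the optimal effort is `β2 n`,
the maximal utility is `α + β2² n² / 2 - y1 (β2 - β1)`, and the tax paid is
`-α + (1 - β2) β2 n² + (β2 - β1) y1`. -/
theorem stmt3 (α β1 β2 y1 n : ℝ)
    (hα : 0 ≤ α) (hβ1 : β1 ∈ Set.Ioc (0:ℝ) 1) (hβ2 : β2 ∈ Set.Ioc (0:ℝ) 1)
    (hy1 : 0 < y1) (hcase : β2 ≤ β1) (hn : 0 < n)
    (hn2 : Real.sqrt (y1 / β2) ≤ n) :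
    IsMaxOn (fun l => (n * l - tax α β1 β2 y1 (n * l)) - l ^ 2 / 2) (Set.Ici 0) (β2 * n) ∧
    (n * (β2 * n) - tax α β1 β2 y1 (n * (β2 * n))) - (β2 * n) ^ 2 / 2
      = α + β2 ^ 2 * n ^ 2 / 2 - y1 * (β2 - β1) ∧
    tax α β1 β2 y1 (n * (β2 * n)) = -α + (1 - β2) * β2 * n ^ 2 + (β2 - β1) * y1 := by
  obtain ⟨hb1, hb1'⟩ := hβ1
  obtain ⟨hb2, hb2'⟩ := hβ2
  have hkey : y1 ≤ β2 * n ^ 2 := by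
    have h0 : (0:ℝ) ≤ y1 / β2 := le_of_lt (div_pos hy1 hb2)
    have hsq : Real.sqrt (y1 / β2) ^ 2 = y1 / β2 := Real.sq_sqrt h0
    have : y1 / β2 ≤ n ^ 2 := by
      nlinarith [Real.sqrt_nonneg (y1 / β2)]
    have := (div_le_iff₀ hb2).mp this
    nlinarith
  have hval : (n * (β2 * n) - tax α β1 β2 y1 (n * (β2 * n))) - (β2 * n) ^ 2 / 2
      = α + β2 ^ 2 * n ^ 2 / 2 - y1 * (β2 - β1) := by
    unfold tax
    rcases le_or_gt (n * (β2 * n)) y1 with h | h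
    · rw [if_pos h]
      have heq : n * (β2 * n) = y1 := le_antisymm h (by nlinarith)
      nlinarith [heq]
    · rw [if_neg (not_le.mpr h)]; ring
  have htax : tax α β1 β2 y1 (n * (β2 * n)) = -α + (1 - β2) * β2 * n ^ 2 + (β2 - β1) * y1 := by
    unfold tax
    rcases le_or_gt (n * (β2 * n)) y1 with h | h
    · rw [if_pos h]
      have heq : n * (β2 * n) = y1 := le_antisymm h (by nlinarith)
      nlinarith [heq]
    · rw [if_neg (not_le.mpr h)]; ring
  refine ⟨?_, hval, htax⟩
  rw [isMaxOn_iff]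
  intro l hl
  simp only [Set.mem_Ici] at hl
  rw [hval]
  unfold tax
  rcases le_or_gt (n * l) y1 with h | h
  · rw [if_pos h]
    nlinarith [sq_nonneg (l - β2 * n), sq_nonneg l]
  · rw [if_neg (not_le.mpr h)]
    nlinarith [sq_nonneg (l - β2 * n)]
end

section
/- Consider an individual with skill n > 0 facing the piecewise-linear tax t with parameters α ≥ 0, β1, β2 ∈ (0,1], kink y1 > 0, in the convex case β1 ≥ β2. If n1 ≤ n ≤ n2 where n1 = √(y1/β1) and n2 = √(y1/β2), then the function l ↦ u(nl − t(nl), l) = (nl − t(nl)) − l²/2 attains its maximum over l ≥ 0 at l = y1/n, the maximal utility value equals α + β1y1 − y1²/(2n²), and the tax paid at the optimum equals −α + (1−β1)y1. -/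
open MeasureTheory Set

/-- Convex case `β1 ≥ β2`, `n1 ≤ n ≤ n2` with `n1 = √(y1 / β1)`, `n2 = √(y1 / β2)`:
the optimal effort is `y1 / n`, the maximal utility is `α + β1 y1 - y1² / (2 n²)`,
and the tax paid is `-α + (1 - β1) y1`. -/
theorem stmt4 (α β1 β2 y1 n : ℝ)
    (hα : 0 ≤ α) (hβ1 : β1 ∈ Set.Ioc (0:ℝ) 1) (hβ2 : β2 ∈ Set.Ioc (0:ℝ) 1)
    (hy1 : 0 < y1) (hcase : β2 ≤ β1) (hn : 0 < n)
    (hn1 : Real.sqrt (y1 / β1) ≤ n) (hn2 : n ≤ Real.sqrt (y1 / β2)) :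
    IsMaxOn (fun l => (n * l - tax α β1 β2 y1 (n * l)) - l ^ 2 / 2) (Set.Ici 0) (y1 / n) ∧
    (n * (y1 / n) - tax α β1 β2 y1 (n * (y1 / n))) - (y1 / n) ^ 2 / 2
      = α + β1 * y1 - y1 ^ 2 / (2 * n ^ 2) ∧
    tax α β1 β2 y1 (n * (y1 / n)) = -α + (1 - β1) * y1 := by
  obtain ⟨hb1, hb1'⟩ := hβ1
  obtain ⟨hb2, hb2'⟩ := hβ2
  have hns : y1 / β1 ≤ n ^ 2 := by
    have h := Real.sq_sqrt (le_of_lt (div_pos hy1 hb1))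
    nlinarith [Real.sqrt_nonneg (y1 / β1)]
  have hns2 : n ^ 2 ≤ y1 / β2 := by
    have h := Real.sq_sqrt (le_of_lt (div_pos hy1 hb2))
    nlinarith [Real.sqrt_nonneg (y1 / β2)]
  have h1 : y1 ≤ β1 * n ^ 2 := by
    rw [div_le_iff₀ hb1] at hns; linarith
  have h2 : β2 * n ^ 2 ≤ y1 := by
    rw [le_div_iff₀ hb2] at hns2; linarith
  set m := y1 / n with hmdef
  have hm : n * m = y1 := by rw [hmdef]; field_simp [hn.ne']
  have hm1 : m ≤ β1 * n := by
    rw [hmdef, div_le_iff₀ hn]; nlinarith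
  have hm2 : β2 * n ≤ m := by
    rw [hmdef, le_div_iff₀ hn]; nlinarith
  have htax : tax α β1 β2 y1 (n * m) = -α + (1 - β1) * y1 := by
    rw [hm, tax, if_pos le_rfl]
  refine ⟨?_, ?_, htax⟩
  · intro l hl
    simp only [Set.mem_Ici] at hl
    simp only [Set.mem_setOf_eq, htax]
    rw [hm]
    unfold tax
    split_ifs with h
    · have hlm : l ≤ m := by
        rw [← hm] at h
        exact le_of_mul_le_mul_left h hn
      nlinarith [mul_nonneg (sub_nonneg.mpr hlm) (by nlinarith : 0 ≤ 2 * (β1 * n) - l - m)]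
    · push_neg at h
      rw [← hm] at h
      have hlm : m ≤ l := le_of_lt (lt_of_mul_lt_mul_left h hn.le)
      nlinarith [mul_nonneg (sub_nonneg.mpr hlm) (by nlinarith : 0 ≤ l + m - 2 * (β2 * n))]
  · rw [htax, hm, hmdef]
    field_simp
    ring
end

section
/- In the convex case β1 ≥ β2 of the piecewise-linear tax, with l_max(n) = β1·n for 0 < n < n1, l_max(n) = y1/n for n1 ≤ n ≤ n2, and l_max(n) = β2·n for n > n2, the balanced-budget condition ∫₀^∞ t(n·l_max(n)) f(n) dn = 0 is equivalent to α = ∫₀^{n1} (1−β1)β1 n² f(n) dn + (1−β1)y1 ∫_{n1}^{n2} f(n) dn + ∫_{n2}^∞ [(1−β2)β2 n² + (β2−β1)y1] f(n) dn. -/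
open MeasureTheory Set

/-- Convex case `β1 ≥ β2`: with the optimal efforts `lmax n = β1 n` for `0 < n < n1`,
`lmax n = y1/n` for `n1 ≤ n ≤ n2` and `lmax n = β2 n` for `n > n2`, the balanced-budget
condition `∫₀^∞ t(n lmax n) f(n) dn = 0` is equivalent to
`α = ∫₀^{n1} (1-β1) β1 n² f(n) dn + (1-β1) y1 ∫_{n1}^{n2} f(n) dn
   + ∫_{n2}^∞ [(1-β2) β2 n² + (β2-β1) y1] f(n) dn`. -/
theorem stmt6 (α β1 β2 y1 n1 n2 : ℝ) (f : ℝ → ℝ)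
    (hα : 0 ≤ α) (hβ1 : β1 ∈ Set.Ioc (0:ℝ) 1) (hβ2 : β2 ∈ Set.Ioc (0:ℝ) 1)
    (hy1 : 0 < y1) (hcase : β2 ≤ β1)
    (hn1 : n1 = Real.sqrt (y1 / β1)) (hn2 : n2 = Real.sqrt (y1 / β2))
    (hf_nonneg : ∀ n ∈ Set.Ioi (0:ℝ), 0 ≤ f n)
    (hf_int : IntegrableOn f (Set.Ioi 0))
    (hf_one : ∫ n in Set.Ioi (0:ℝ), f n = 1)
    (hf2 : IntegrableOn (fun n => n ^ 2 * f n) (Set.Ioi 0))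
    (lmax : ℝ → ℝ)
    (hl1 : ∀ n, 0 < n → n < n1 → lmax n = β1 * n)
    (hl2 : ∀ n, n1 ≤ n → n ≤ n2 → lmax n = y1 / n)
    (hl3 : ∀ n, n2 < n → lmax n = β2 * n) :
    (∫ n in Set.Ioi (0:ℝ), tax α β1 β2 y1 (n * lmax n) * f n) = 0 ↔
      α = (∫ n in Set.Ioo (0:ℝ) n1, (1 - β1) * β1 * n ^ 2 * f n)
        + (1 - β1) * y1 * (∫ n in Set.Icc n1 n2, f n)
        + ∫ n in Set.Ioi n2, ((1 - β2) * β2 * n ^ 2 + (β2 - β1) * y1) * f n := by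
  obtain ⟨hb1, hb1'⟩ := hβ1
  obtain ⟨hb2, hb2'⟩ := hβ2
  have hn1pos : 0 < n1 := by
    rw [hn1]; exact Real.sqrt_pos.mpr (div_pos hy1 hb1)
  have hn1sq : n1 ^ 2 = y1 / β1 := by
    rw [hn1, Real.sq_sqrt (le_of_lt (div_pos hy1 hb1))]
  have hn2sq : n2 ^ 2 = y1 / β2 := by
    rw [hn2, Real.sq_sqrt (le_of_lt (div_pos hy1 hb2))]
  have h12 : n1 ≤ n2 := by
    rw [hn1, hn2]
    apply Real.sqrt_le_sqrt
    exact div_le_div_of_nonneg_left hy1.le hb2 hcase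
  have hn2pos : 0 < n2 := lt_of_lt_of_le hn1pos h12
  -- subset facts
  have s1 : Set.Ioo (0:ℝ) n1 ⊆ Set.Ioi 0 := Set.Ioo_subset_Ioi_self
  have s2 : Set.Icc n1 n2 ⊆ Set.Ioi (0:ℝ) := fun x hx => lt_of_lt_of_le hn1pos hx.1
  have s3 : Set.Ioi n2 ⊆ Set.Ioi (0:ℝ) := Set.Ioi_subset_Ioi hn2pos.le
  set F : ℝ → ℝ := fun n => tax α β1 β2 y1 (n * lmax n) * f n with hF
  -- pointwise identifications
  have E1 : Set.EqOn F (fun n => (-α) * f n + ((1 - β1) * β1) * (n ^ 2 * f n))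
      (Set.Ioo 0 n1) := by
    intro n hn
    have hle : β1 * n ^ 2 < y1 := by
      have h1 : n ^ 2 < n1 ^ 2 := by
        apply pow_lt_pow_left₀ hn.2 hn.1.le
        norm_num
      rw [hn1sq] at h1
      calc β1 * n ^ 2 < β1 * (y1 / β1) := by
            exact mul_lt_mul_of_pos_left h1 hb1
        _ = y1 := by field_simp
    simp only [hF, hl1 n hn.1 hn.2]
    have : n * (β1 * n) = β1 * n ^ 2 := by ring
    rw [this, tax, if_pos hle.le]
    ring
  have E2 : Set.EqOn F (fun n => (-α + (1 - β1) * y1) * f n) (Set.Icc n1 n2) := by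
    intro n hn
    have hnpos : 0 < n := lt_of_lt_of_le hn1pos hn.1
    simp only [hF, hl2 n hn.1 hn.2]
    rw [mul_div_cancel₀ y1 hnpos.ne', tax, if_pos le_rfl]
  have E3 : Set.EqOn F
      (fun n => ((-α + (β2 - β1) * y1) * f n + ((1 - β2) * β2) * (n ^ 2 * f n)))
      (Set.Ioi n2) := by
    intro n hn
    have hnpos : 0 < n := lt_trans hn2pos hn
    have hgt : y1 < β2 * n ^ 2 := by
      have h1 : n2 ^ 2 < n ^ 2 := by
        apply pow_lt_pow_left₀ hn hn2pos.le
        norm_num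
      rw [hn2sq] at h1
      calc y1 = β2 * (y1 / β2) := by field_simp
        _ < β2 * n ^ 2 := mul_lt_mul_of_pos_left h1 hb2
    simp only [hF, hl3 n hn]
    have : n * (β2 * n) = β2 * n ^ 2 := by ring
    rw [this, tax, if_neg (not_le.mpr hgt)]
    ring
  -- integrability
  have if1 : IntegrableOn f (Set.Ioo 0 n1) := hf_int.mono_set s1
  have if2 : IntegrableOn f (Set.Icc n1 n2) := hf_int.mono_set s2
  have if3 : IntegrableOn f (Set.Ioi n2) := hf_int.mono_set s3
  have if21 : IntegrableOn (fun n => n ^ 2 * f n) (Set.Ioo 0 n1) := hf2.mono_set s1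
  have if23 : IntegrableOn (fun n => n ^ 2 * f n) (Set.Ioi n2) := hf2.mono_set s3
  have ig1 : IntegrableOn (fun n => (-α) * f n + ((1 - β1) * β1) * (n ^ 2 * f n))
      (Set.Ioo 0 n1) := (if1.const_mul _).add (if21.const_mul _)
  have ig2 : IntegrableOn (fun n => (-α + (1 - β1) * y1) * f n) (Set.Icc n1 n2) :=
    if2.const_mul _
  have ig3 : IntegrableOn
      (fun n => ((-α + (β2 - β1) * y1) * f n + ((1 - β2) * β2) * (n ^ 2 * f n)))
      (Set.Ioi n2) := (if3.const_mul _).add (if23.const_mul _)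
  have iF1 : IntegrableOn F (Set.Ioo 0 n1) := ig1.congr_fun E1.symm measurableSet_Ioo
  have iF2 : IntegrableOn F (Set.Icc n1 n2) := ig2.congr_fun E2.symm measurableSet_Icc
  have iF3 : IntegrableOn F (Set.Ioi n2) := ig3.congr_fun E3.symm measurableSet_Ioi
  -- disjointness
  have d1 : Disjoint (Set.Ioo (0:ℝ) n1) (Set.Ici n1) := by
    rw [Set.disjoint_left]
    intro x hx hx'
    exact absurd hx' (not_le.mpr hx.2)
  have d2 : Disjoint (Set.Icc n1 n2) (Set.Ioi n2) := by
    rw [Set.disjoint_left]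
    intro x hx hx'
    exact absurd hx' (not_lt.mpr hx.2)
  have hIci : Set.Icc n1 n2 ∪ Set.Ioi n2 = Set.Ici n1 := Set.Icc_union_Ioi_eq_Ici h12
  have hIoi : Set.Ioo (0:ℝ) n1 ∪ Set.Ici n1 = Set.Ioi 0 := Set.Ioo_union_Ici_eq_Ioi hn1pos
  -- splitting a set integral over Ioi 0
  have split : ∀ g : ℝ → ℝ, IntegrableOn g (Set.Ioo 0 n1) →
      IntegrableOn g (Set.Icc n1 n2) → IntegrableOn g (Set.Ioi n2) →
      (∫ n in Set.Ioi (0:ℝ), g n) =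
        (∫ n in Set.Ioo (0:ℝ) n1, g n) + (∫ n in Set.Icc n1 n2, g n)
          + (∫ n in Set.Ioi n2, g n) := by
    intro g hg1 hg2 hg3
    have hIci' : IntegrableOn g (Set.Ici n1) := by
      rw [← hIci]; exact hg2.union hg3
    rw [← hIoi, setIntegral_union d1 measurableSet_Ici hg1 hIci',
      ← hIci, setIntegral_union d2 measurableSet_Ioi hg2 hg3, add_assoc]
  -- split of the density integral
  have hf_split : (∫ n in Set.Ioo (0:ℝ) n1, f n) + (∫ n in Set.Icc n1 n2, f n)
      + (∫ n in Set.Ioi n2, f n) = 1 := by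
    rw [← split f if1 if2 if3]; exact hf_one
  -- main computation
  have hmain : (∫ n in Set.Ioi (0:ℝ), F n) =
      ((∫ n in Set.Ioo (0:ℝ) n1, (1 - β1) * β1 * n ^ 2 * f n)
        + (1 - β1) * y1 * (∫ n in Set.Icc n1 n2, f n)
        + ∫ n in Set.Ioi n2, ((1 - β2) * β2 * n ^ 2 + (β2 - β1) * y1) * f n) - α := by
    rw [split F iF1 iF2 iF3,
      setIntegral_congr_fun measurableSet_Ioo E1,
      setIntegral_congr_fun measurableSet_Icc E2,
      setIntegral_congr_fun measurableSet_Ioi E3,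
      integral_add (if1.const_mul _) (if21.const_mul _),
      integral_add (if3.const_mul _) (if23.const_mul _),
      integral_const_mul, integral_const_mul, integral_const_mul, integral_const_mul,
      integral_const_mul]
    have e1 : (∫ n in Set.Ioo (0:ℝ) n1, (1 - β1) * β1 * n ^ 2 * f n) =
        (1 - β1) * β1 * ∫ n in Set.Ioo (0:ℝ) n1, n ^ 2 * f n := by
      rw [← integral_const_mul]
      apply setIntegral_congr_fun measurableSet_Ioo
      intro n _; ring
    have e3 : (∫ n in Set.Ioi n2, ((1 - β2) * β2 * n ^ 2 + (β2 - β1) * y1) * f n) =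
        (β2 - β1) * y1 * (∫ n in Set.Ioi n2, f n)
          + (1 - β2) * β2 * ∫ n in Set.Ioi n2, n ^ 2 * f n := by
      rw [← integral_const_mul, ← integral_const_mul,
        ← integral_add (if3.const_mul _) (if23.const_mul _)]
      apply setIntegral_congr_fun measurableSet_Ioi
      intro n _; ring
    rw [e1, e3]
    have := hf_split
    nlinarith [hf_split]
  constructor
  · intro h
    rw [hmain] at h
    linarith
  · intro h
    rw [hmain, ← h]
    ring
end

section
/- In the concave case β1 ≤ β2 of the piecewise-linear tax, if α equals ∫₀^{n3} (1−β1)β1 n² f(n) dn + ∫_{n3}^∞ [(1−β2)β2 n² + (β2−β1)y1] f(n) dn (the balanced-budget value), then the total expected utility U = ∫₀^∞ u_max(n) f(n) dn, where u_max(n) = α + β1²n²/2 for n ≤ n3 and u_max(n) = α + β2²n²/2 − y1(β2−β1) for n > n3, equals ∫₀^{n3} (β1 − β1²/2) n² f(n) dn + ∫_{n3}^∞ (β2 − β2²/2) n² f(n) dn. -/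
open MeasureTheory Set

/-- Concave case `β1 ≤ β2`: if `α` is the balanced-budget value, then the total expected
utility `U = ∫₀^∞ u_max(n) f(n) dn`, with `u_max(n) = α + β1² n²/2` for `n ≤ n3` and
`u_max(n) = α + β2² n²/2 - y1 (β2 - β1)` for `n > n3`, equals
`∫₀^{n3} (β1 - β1²/2) n² f(n) dn + ∫_{n3}^∞ (β2 - β2²/2) n² f(n) dn`. -/
theorem stmt7 (α β1 β2 y1 n3 : ℝ) (f : ℝ → ℝ)
    (hβ1 : β1 ∈ Set.Ioc (0:ℝ) 1) (hβ2 : β2 ∈ Set.Ioc (0:ℝ) 1)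
    (hy1 : 0 < y1) (hcase : β1 ≤ β2)
    (hn3 : n3 = Real.sqrt (2 * y1 / (β1 + β2)))
    (hf_nonneg : ∀ n ∈ Set.Ioi (0:ℝ), 0 ≤ f n)
    (hf_int : IntegrableOn f (Set.Ioi 0))
    (hf_one : ∫ n in Set.Ioi (0:ℝ), f n = 1)
    (hf2 : IntegrableOn (fun n => n ^ 2 * f n) (Set.Ioi 0))
    (hα : α = (∫ n in Set.Ioc (0:ℝ) n3, (1 - β1) * β1 * n ^ 2 * f n)
        + ∫ n in Set.Ioi n3, ((1 - β2) * β2 * n ^ 2 + (β2 - β1) * y1) * f n) :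
    (∫ n in Set.Ioi (0:ℝ),
        (if n ≤ n3 then α + β1 ^ 2 * n ^ 2 / 2
         else α + β2 ^ 2 * n ^ 2 / 2 - y1 * (β2 - β1)) * f n)
      = (∫ n in Set.Ioc (0:ℝ) n3, (β1 - β1 ^ 2 / 2) * n ^ 2 * f n)
        + ∫ n in Set.Ioi n3, (β2 - β2 ^ 2 / 2) * n ^ 2 * f n := by
  have hn3nn : 0 ≤ n3 := hn3 ▸ Real.sqrt_nonneg _
  have hsub1 : Set.Ioc (0:ℝ) n3 ⊆ Set.Ioi 0 := Set.Ioc_subset_Ioi_self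
  have hsub2 : Set.Ioi n3 ⊆ Set.Ioi (0:ℝ) := Set.Ioi_subset_Ioi hn3nn
  have hfS1 : IntegrableOn f (Set.Ioc (0:ℝ) n3) := hf_int.mono_set hsub1
  have hfS2 : IntegrableOn f (Set.Ioi n3) := hf_int.mono_set hsub2
  have hf2S1 : IntegrableOn (fun n => n ^ 2 * f n) (Set.Ioc (0:ℝ) n3) := hf2.mono_set hsub1
  have hf2S2 : IntegrableOn (fun n => n ^ 2 * f n) (Set.Ioi n3) := hf2.mono_set hsub2
  set A1 := ∫ n in Set.Ioc (0:ℝ) n3, f n with hA1def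
  set A2 := ∫ n in Set.Ioi n3, f n with hA2def
  set B1 := ∫ n in Set.Ioc (0:ℝ) n3, n ^ 2 * f n with hB1def
  set B2 := ∫ n in Set.Ioi n3, n ^ 2 * f n with hB2def
  -- integrability of the if-integrand on each piece
  have hi1 : IntegrableOn (fun n => (α + β1 ^ 2 * n ^ 2 / 2) * f n) (Set.Ioc (0:ℝ) n3) := by
    have : (fun n => (α + β1 ^ 2 * n ^ 2 / 2) * f n)
        = fun n => α * f n + (β1 ^ 2 / 2) * (n ^ 2 * f n) := by funext n; ring
    rw [this]
    exact (hfS1.const_mul α).add (hf2S1.const_mul _)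
  have hi2 : IntegrableOn (fun n => (α + β2 ^ 2 * n ^ 2 / 2 - y1 * (β2 - β1)) * f n)
      (Set.Ioi n3) := by
    have : (fun n => (α + β2 ^ 2 * n ^ 2 / 2 - y1 * (β2 - β1)) * f n)
        = fun n => (α - y1 * (β2 - β1)) * f n + (β2 ^ 2 / 2) * (n ^ 2 * f n) := by
      funext n; ring
    rw [this]
    exact (hfS2.const_mul _).add (hf2S2.const_mul _)
  -- the if-function agrees a.e. with each piece on its set
  have hcg1 : ∫ n in Set.Ioc (0:ℝ) n3,
      (if n ≤ n3 then α + β1 ^ 2 * n ^ 2 / 2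
         else α + β2 ^ 2 * n ^ 2 / 2 - y1 * (β2 - β1)) * f n
      = ∫ n in Set.Ioc (0:ℝ) n3, (α + β1 ^ 2 * n ^ 2 / 2) * f n := by
    apply setIntegral_congr_fun measurableSet_Ioc
    intro n hn
    simp [hn.2]
  have hcg2 : ∫ n in Set.Ioi n3,
      (if n ≤ n3 then α + β1 ^ 2 * n ^ 2 / 2
         else α + β2 ^ 2 * n ^ 2 / 2 - y1 * (β2 - β1)) * f n
      = ∫ n in Set.Ioi n3, (α + β2 ^ 2 * n ^ 2 / 2 - y1 * (β2 - β1)) * f n := by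
    apply setIntegral_congr_fun measurableSet_Ioi
    intro n hn
    simp [not_le.mpr (Set.mem_Ioi.mp hn)]
  -- integrability of the if-function on the pieces
  have hii1 : IntegrableOn (fun n =>
      (if n ≤ n3 then α + β1 ^ 2 * n ^ 2 / 2
         else α + β2 ^ 2 * n ^ 2 / 2 - y1 * (β2 - β1)) * f n) (Set.Ioc (0:ℝ) n3) := by
    apply hi1.congr_fun _ measurableSet_Ioc
    intro n hn; simp [hn.2]
  have hii2 : IntegrableOn (fun n =>
      (if n ≤ n3 then α + β1 ^ 2 * n ^ 2 / 2
         else α + β2 ^ 2 * n ^ 2 / 2 - y1 * (β2 - β1)) * f n) (Set.Ioi n3) := by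
    apply hi2.congr_fun _ measurableSet_Ioi
    intro n hn; simp [not_le.mpr (Set.mem_Ioi.mp hn)]
  -- split the main integral
  have hsplit : (∫ n in Set.Ioi (0:ℝ),
        (if n ≤ n3 then α + β1 ^ 2 * n ^ 2 / 2
         else α + β2 ^ 2 * n ^ 2 / 2 - y1 * (β2 - β1)) * f n)
      = (α * A1 + β1 ^ 2 / 2 * B1) + ((α - y1 * (β2 - β1)) * A2 + β2 ^ 2 / 2 * B2) := by
    rw [← Set.Ioc_union_Ioi_eq_Ioi hn3nn,
      setIntegral_union (Set.Ioc_disjoint_Ioi le_rfl) measurableSet_Ioi hii1 hii2,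
      hcg1, hcg2]
    congr 1
    · have : (fun n => (α + β1 ^ 2 * n ^ 2 / 2) * f n)
          = fun n => α * f n + (β1 ^ 2 / 2) * (n ^ 2 * f n) := by funext n; ring
      rw [this, integral_add (hfS1.const_mul α) (hf2S1.const_mul _),
        integral_const_mul, integral_const_mul]
    · have : (fun n => (α + β2 ^ 2 * n ^ 2 / 2 - y1 * (β2 - β1)) * f n)
          = fun n => (α - y1 * (β2 - β1)) * f n + (β2 ^ 2 / 2) * (n ^ 2 * f n) := by
        funext n; ring
      rw [this, integral_add (hfS2.const_mul _) (hf2S2.const_mul _),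
        integral_const_mul, integral_const_mul]
  -- total mass splits
  have hone : A1 + A2 = 1 := by
    rw [hA1def, hA2def, ← setIntegral_union (Set.Ioc_disjoint_Ioi le_rfl) measurableSet_Ioi
      hfS1 hfS2, Set.Ioc_union_Ioi_eq_Ioi hn3nn, hf_one]
  -- rewrite hα in terms of A's and B's
  have hα' : α = (1 - β1) * β1 * B1 + ((1 - β2) * β2 * B2 + (β2 - β1) * y1 * A2) := by
    rw [hα]
    congr 1
    · rw [hB1def, ← integral_const_mul]
      apply setIntegral_congr_fun measurableSet_Ioc
      intro n _; ring
    · have : (fun n => ((1 - β2) * β2 * n ^ 2 + (β2 - β1) * y1) * f n)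
          = fun n => ((1 - β2) * β2) * (n ^ 2 * f n) + ((β2 - β1) * y1) * f n := by
        funext n; ring
      rw [this, integral_add (hf2S2.const_mul _) (hfS2.const_mul _),
        integral_const_mul, integral_const_mul]
  -- rewrite RHS in terms of B's
  have hrhs1 : ∫ n in Set.Ioc (0:ℝ) n3, (β1 - β1 ^ 2 / 2) * n ^ 2 * f n
      = (β1 - β1 ^ 2 / 2) * B1 := by
    rw [hB1def, ← integral_const_mul]
    apply setIntegral_congr_fun measurableSet_Ioc
    intro n _; ring
  have hrhs2 : ∫ n in Set.Ioi n3, (β2 - β2 ^ 2 / 2) * n ^ 2 * f n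
      = (β2 - β2 ^ 2 / 2) * B2 := by
    rw [hB2def, ← integral_const_mul]
    apply setIntegral_congr_fun measurableSet_Ioi
    intro n _; ring
  rw [hsplit, hrhs1, hrhs2]
  have hA1' : A1 = 1 - A2 := by linarith
  rw [hα', hA1']
  ring
end

section
/- For β1 ∈ (0,1] fixed and kink y1 > 0 fixed, the function β2 ↦ U(β1,β2) := ∫₀^{n3(β2)} (β1 − β1²/2) n² f(n) dn + ∫_{n3(β2)}^∞ (β2 − β2²/2) n² f(n) dn, where n3(β2) = √(2y1/(β1+β2)), is nondecreasing in β2 on the interval [β1, 1]. -/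
open MeasureTheory Set

/-- For fixed `β1 ∈ (0,1]` and kink `y1 > 0`, the balanced-budget total expected utility
`β2 ↦ U(β1, β2)` of the concave two-bracket tax is nondecreasing in `β2` on `[β1, 1]`. -/
theorem stmt9 (β1 y1 : ℝ) (f : ℝ → ℝ)
    (hβ1 : β1 ∈ Set.Ioc (0:ℝ) 1) (hy1 : 0 < y1)
    (hf_cont : ContinuousOn f (Set.Ioi 0))
    (hf_nonneg : ∀ n ∈ Set.Ioi (0:ℝ), 0 ≤ f n)
    (hf_int : IntegrableOn f (Set.Ioi 0))
    (hf_one : ∫ n in Set.Ioi (0:ℝ), f n = 1)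
    (hf2 : IntegrableOn (fun n => n ^ 2 * f n) (Set.Ioi 0)) :
    MonotoneOn (fun β2 =>
      (∫ n in Set.Ioc (0:ℝ) (Real.sqrt (2 * y1 / (β1 + β2))),
          (β1 - β1 ^ 2 / 2) * n ^ 2 * f n)
      + ∫ n in Set.Ioi (Real.sqrt (2 * y1 / (β1 + β2))),
          (β2 - β2 ^ 2 / 2) * n ^ 2 * f n)
      (Set.Icc β1 1) := by
  obtain ⟨hβ1pos, hβ1le⟩ := hβ1
  intro a ha b hb hab
  set g : ℝ → ℝ := fun n => n ^ 2 * f n with hg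
  set sa := Real.sqrt (2 * y1 / (β1 + a)) with hsa
  set sb := Real.sqrt (2 * y1 / (β1 + b)) with hsb
  have hapos : 0 < β1 + a := by linarith [ha.1]
  have hbpos : 0 < β1 + b := by linarith [hb.1]
  have hsbpos : 0 < sb := Real.sqrt_pos.mpr (div_pos (by linarith) hbpos)
  have hsba : sb ≤ sa := by
    apply Real.sqrt_le_sqrt
    exact div_le_div_of_nonneg_left (by linarith) hapos (by linarith [hab])
  have hsapos : 0 < sa := lt_of_lt_of_le hsbpos hsba
  -- subset facts
  have hI1_sub : Ioc sb sa ⊆ Ioi (0:ℝ) := fun x hx => lt_trans hsbpos hx.1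
  have hI2_sub : Ioi sa ⊆ Ioi (0:ℝ) := Ioi_subset_Ioi hsapos.le
  have hIoca_sub : Ioc (0:ℝ) sa ⊆ Ioi 0 := Ioc_subset_Ioi_self
  have hIocb_sub : Ioc (0:ℝ) sb ⊆ Ioi 0 := Ioc_subset_Ioi_self
  have hIoib_sub : Ioi sb ⊆ Ioi (0:ℝ) := Ioi_subset_Ioi hsbpos.le
  -- splitting of integrals
  have split1 : ∫ n in Ioc (0:ℝ) sa, g n =
      (∫ n in Ioc (0:ℝ) sb, g n) + ∫ n in Ioc sb sa, g n := by
    rw [← setIntegral_union (Ioc_disjoint_Ioc_of_le le_rfl) measurableSet_Ioc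
        (hf2.mono_set hIocb_sub) (hf2.mono_set hI1_sub),
      Ioc_union_Ioc_eq_Ioc hsbpos.le hsba]
  have split2 : ∫ n in Ioi sb, g n =
      (∫ n in Ioc sb sa, g n) + ∫ n in Ioi sa, g n := by
    rw [← setIntegral_union (Ioc_disjoint_Ioi le_rfl) measurableSet_Ioi
        (hf2.mono_set hI1_sub) (hf2.mono_set hI2_sub),
      Ioc_union_Ioi_eq_Ioi hsba]
  -- nonnegativity of pieces
  have hgnn : ∀ n ∈ Ioi (0:ℝ), 0 ≤ g n := fun n hn =>
    mul_nonneg (sq_nonneg n) (hf_nonneg n hn)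
  have hI1nn : 0 ≤ ∫ n in Ioc sb sa, g n :=
    setIntegral_nonneg measurableSet_Ioc (fun n hn => hgnn n (hI1_sub hn))
  have hI2nn : 0 ≤ ∫ n in Ioi sa, g n :=
    setIntegral_nonneg measurableSet_Ioi (fun n hn => hgnn n (hI2_sub hn))
  -- rewrite both sides with constants pulled out
  have hpull : ∀ (c : ℝ) (s : Set ℝ),
      (∫ n in s, c * n ^ 2 * f n) = c * ∫ n in s, g n := by
    intro c s
    rw [← MeasureTheory.integral_const_mul]
    congr 1 with n
    ring
  simp only [hpull]
  rw [split1, split2]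
  -- coefficient inequalities
  have hc1 : β1 - β1 ^ 2 / 2 ≤ b - b ^ 2 / 2 := by nlinarith [ha.1, hab, hb.2]
  have hc2 : a - a ^ 2 / 2 ≤ b - b ^ 2 / 2 := by nlinarith [ha.1, hab, hb.2]
  nlinarith [mul_le_mul_of_nonneg_right hc1 hI1nn, mul_le_mul_of_nonneg_right hc2 hI2nn]
end

section
/- For β2 ∈ (0,1] fixed and kink y1 > 0 fixed, the function β1 ↦ U(β1,β2) := ∫₀^{n3(β1)} (β1 − β1²/2) n² f(n) dn + ∫_{n3(β1)}^∞ (β2 − β2²/2) n² f(n) dn, where n3(β1) = √(2y1/(β1+β2)), is nondecreasing in β1 on the interval (0, β2]. -/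
open MeasureTheory Set

/-- For fixed `β2 ∈ (0,1]` and kink `y1 > 0`, the balanced-budget total expected utility
`β1 ↦ U(β1, β2)` of the concave two-bracket tax is nondecreasing in `β1` on `(0, β2]`. -/
theorem stmt10 (β2 y1 : ℝ) (f : ℝ → ℝ)
    (hβ2 : β2 ∈ Set.Ioc (0:ℝ) 1) (hy1 : 0 < y1)
    (hf_cont : ContinuousOn f (Set.Ioi 0))
    (hf_nonneg : ∀ n ∈ Set.Ioi (0:ℝ), 0 ≤ f n)
    (hf_int : IntegrableOn f (Set.Ioi 0))
    (hf_one : ∫ n in Set.Ioi (0:ℝ), f n = 1)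
    (hf2 : IntegrableOn (fun n => n ^ 2 * f n) (Set.Ioi 0)) :
    MonotoneOn (fun β1 =>
      (∫ n in Set.Ioc (0:ℝ) (Real.sqrt (2 * y1 / (β1 + β2))),
          (β1 - β1 ^ 2 / 2) * n ^ 2 * f n)
      + ∫ n in Set.Ioi (Real.sqrt (2 * y1 / (β1 + β2))),
          (β2 - β2 ^ 2 / 2) * n ^ 2 * f n)
      (Set.Ioc 0 β2) := by
  obtain ⟨hβ0, hβ1⟩ := hβ2
  intro a ha b hb hab
  obtain ⟨ha0, haβ⟩ := ha
  obtain ⟨hb0, hbβ⟩ := hb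
  set na := Real.sqrt (2 * y1 / (a + β2)) with hna
  set nb := Real.sqrt (2 * y1 / (b + β2)) with hnb
  have hab2 : (0:ℝ) < a + β2 := by linarith
  have hbb2 : (0:ℝ) < b + β2 := by linarith
  have hnb0 : 0 < nb := Real.sqrt_pos.mpr (by positivity)
  have hba : nb ≤ na := by
    apply Real.sqrt_le_sqrt
    apply div_le_div_of_nonneg_left (by linarith) hab2 (by linarith)
  -- subsets of Ioi 0
  have hsubA : Set.Ioc (0:ℝ) nb ⊆ Set.Ioi 0 := fun x hx => hx.1
  have hsubB : Set.Ioc nb na ⊆ Set.Ioi 0 := fun x hx => lt_trans hnb0 hx.1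
  have hsubC : Set.Ioi na ⊆ Set.Ioi (0:ℝ) := fun x hx =>
    lt_trans (lt_of_lt_of_le hnb0 hba) hx
  have hIA : IntegrableOn (fun n => n ^ 2 * f n) (Set.Ioc (0:ℝ) nb) :=
    hf2.mono_set hsubA
  have hIB : IntegrableOn (fun n => n ^ 2 * f n) (Set.Ioc nb na) :=
    hf2.mono_set hsubB
  have hIC : IntegrableOn (fun n => n ^ 2 * f n) (Set.Ioi na) :=
    hf2.mono_set hsubC
  set IA := ∫ n in Set.Ioc (0:ℝ) nb, n ^ 2 * f n with hIAdef
  set IB := ∫ n in Set.Ioc nb na, n ^ 2 * f n with hIBdef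
  set IC := ∫ n in Set.Ioi na, n ^ 2 * f n with hICdef
  have hconst : ∀ (c : ℝ) (S : Set ℝ),
      (∫ n in S, c * n ^ 2 * f n) = c * ∫ n in S, n ^ 2 * f n := by
    intro c S
    simp_rw [mul_assoc]
    exact integral_const_mul c _
  have hnnA : 0 ≤ IA := by
    apply setIntegral_nonneg measurableSet_Ioc
    intro n hn
    have := hf_nonneg n (hsubA hn)
    have h0 : 0 < n := hn.1
    positivity
  have hnnB : 0 ≤ IB := by
    apply setIntegral_nonneg measurableSet_Ioc
    intro n hn
    have := hf_nonneg n (hsubB hn)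
    have h0 : 0 < n := hsubB hn
    positivity
  have hsplit1 : (∫ n in Set.Ioc (0:ℝ) na, n ^ 2 * f n) = IA + IB := by
    rw [← Set.Ioc_union_Ioc_eq_Ioc hnb0.le hba,
      setIntegral_union (Set.Ioc_disjoint_Ioc_of_le le_rfl) measurableSet_Ioc hIA hIB]
  have hsplit2 : (∫ n in Set.Ioi nb, n ^ 2 * f n) = IB + IC := by
    rw [← Set.Ioc_union_Ioi_eq_Ioi hba,
      setIntegral_union Set.Ioc_disjoint_Ioi_same measurableSet_Ioi hIB hIC]
  simp only [hconst, hsplit1, hsplit2]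
  have hg1 : (0:ℝ) ≤ (b - b ^ 2 / 2) - (a - a ^ 2 / 2) := by nlinarith
  have hg2 : (0:ℝ) ≤ (β2 - β2 ^ 2 / 2) - (a - a ^ 2 / 2) := by nlinarith
  nlinarith [mul_nonneg hnnA hg1, mul_nonneg hnnB hg2]
end

section
/- Define, for parameters β1, β2 ∈ (0,1] and kink y1 > 0, the balanced-budget total expected utility U(β1,β2,y1) as ∫₀^{n3} (β1 − β1²/2) n² f(n) dn + ∫_{n3}^∞ (β2 − β2²/2) n² f(n) dn with n3 = √(2y1/(β1+β2)) when β1 ≤ β2, and as ∫₀^{n1} (β1 − β1²/2) n² f(n) dn + ∫_{n1}^{n2} (y1 − y1²/(2n²)) f(n) dn + ∫_{n2}^∞ (β2 − β2²/2) n² f(n) dn with n1 = √(y1/β1), n2 = √(y1/β2) when β1 ≥ β2. Then the maximum of U over β1 ∈ (0,1], β2 ∈ (0,1], y1 > 0 equals (1/2)∫₀^∞ n² f(n) dn and is attained at β1 = β2 = 1 (i.e., no taxation). -/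
open MeasureTheory Set

/-- Balanced-budget total expected utility of the two-bracket piecewise-linear tax with
retained proportions `β1, β2`, kink `y1`, and skill density `f`. -/
noncomputable def totalUtility (f : ℝ → ℝ) (β1 β2 y1 : ℝ) : ℝ :=
  if β1 ≤ β2 then
    (∫ n in Set.Ioc (0:ℝ) (Real.sqrt (2 * y1 / (β1 + β2))),
        (β1 - β1 ^ 2 / 2) * n ^ 2 * f n)
    + ∫ n in Set.Ioi (Real.sqrt (2 * y1 / (β1 + β2))),
        (β2 - β2 ^ 2 / 2) * n ^ 2 * f n
  else
    (∫ n in Set.Ioc (0:ℝ) (Real.sqrt (y1 / β1)), (β1 - β1 ^ 2 / 2) * n ^ 2 * f n)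
    + (∫ n in Set.Ioc (Real.sqrt (y1 / β1)) (Real.sqrt (y1 / β2)),
        (y1 - y1 ^ 2 / (2 * n ^ 2)) * f n)
    + ∫ n in Set.Ioi (Real.sqrt (y1 / β2)), (β2 - β2 ^ 2 / 2) * n ^ 2 * f n

lemma split2 {g : ℝ → ℝ} {a : ℝ} (ha : 0 < a)
    (hg : IntegrableOn g (Set.Ioi 0)) :
    (∫ n in Set.Ioc (0:ℝ) a, g n) + ∫ n in Set.Ioi a, g n = ∫ n in Set.Ioi (0:ℝ), g n := by
  rw [← MeasureTheory.setIntegral_union (Set.Ioc_disjoint_Ioi le_rfl) measurableSet_Ioi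
      (hg.mono_set Set.Ioc_subset_Ioi_self) (hg.mono_set (Set.Ioi_subset_Ioi ha.le)),
    Set.Ioc_union_Ioi_eq_Ioi ha.le]

lemma split3 {g : ℝ → ℝ} {a b : ℝ} (ha : 0 < a) (hab : a ≤ b)
    (hg : IntegrableOn g (Set.Ioi 0)) :
    (∫ n in Set.Ioc (0:ℝ) a, g n) + (∫ n in Set.Ioc a b, g n) + ∫ n in Set.Ioi b, g n
      = ∫ n in Set.Ioi (0:ℝ), g n := by
  have h1 : (∫ n in Set.Ioc (0:ℝ) a, g n) + (∫ n in Set.Ioc a b, g n)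
      = ∫ n in Set.Ioc (0:ℝ) b, g n := by
    rw [← MeasureTheory.setIntegral_union (Set.Ioc_disjoint_Ioc.mpr (le_trans inf_le_left le_sup_right))
        measurableSet_Ioc (hg.mono_set Set.Ioc_subset_Ioi_self)
        (hg.mono_set (fun x hx => lt_trans ha hx.1)),
      Set.Ioc_union_Ioc_eq_Ioc ha.le hab]
  rw [h1]
  exact split2 (lt_of_lt_of_le ha hab) hg

lemma beta_bound {β : ℝ} : β - β ^ 2 / 2 ≤ 1 / 2 := by nlinarith [sq_nonneg (1 - β)]

/-- The maximum of the balanced-budget total expected utility over `β1, β2 ∈ (0,1]`,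
`y1 > 0` equals `(1/2) ∫₀^∞ n² f(n) dn` and is attained at `β1 = β2 = 1`
(i.e. no taxation at all). -/
theorem stmt11 (f : ℝ → ℝ)
    (hf_cont : ContinuousOn f (Set.Ioi 0))
    (hf_nonneg : ∀ n ∈ Set.Ioi (0:ℝ), 0 ≤ f n)
    (hf_int : IntegrableOn f (Set.Ioi 0))
    (hf_one : ∫ n in Set.Ioi (0:ℝ), f n = 1)
    (hf2 : IntegrableOn (fun n => n ^ 2 * f n) (Set.Ioi 0))
    (hpos : 0 < ∫ n in Set.Ioi (0:ℝ), n ^ 2 * f n) :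
    (∀ β1 ∈ Set.Ioc (0:ℝ) 1, ∀ β2 ∈ Set.Ioc (0:ℝ) 1, ∀ y1 > (0:ℝ),
        totalUtility f β1 β2 y1 ≤ (1 / 2) * ∫ n in Set.Ioi (0:ℝ), n ^ 2 * f n) ∧
    (∀ y1 > (0:ℝ),
        totalUtility f 1 1 y1 = (1 / 2) * ∫ n in Set.Ioi (0:ℝ), n ^ 2 * f n) := by
  have hhalf : IntegrableOn (fun n => (1/2 : ℝ) * (n ^ 2 * f n)) (Set.Ioi 0) :=
    hf2.const_mul _
  have hhalfI : ∫ n in Set.Ioi (0:ℝ), (1/2 : ℝ) * (n ^ 2 * f n)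
      = (1/2 : ℝ) * ∫ n in Set.Ioi (0:ℝ), n ^ 2 * f n := by
    rw [MeasureTheory.integral_const_mul]
  -- pointwise bound for the constant-coefficient pieces
  have hpw : ∀ β : ℝ, ∀ n ∈ Set.Ioi (0:ℝ),
      (β - β ^ 2 / 2) * (n ^ 2 * f n) ≤ (1/2 : ℝ) * (n ^ 2 * f n) := by
    intro β n hn
    exact mul_le_mul_of_nonneg_right beta_bound
      (mul_nonneg (sq_nonneg n) (hf_nonneg n hn))
  have hintc : ∀ β : ℝ, IntegrableOn (fun n => (β - β ^ 2 / 2) * (n ^ 2 * f n))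
      (Set.Ioi 0) := fun β => hf2.const_mul _
  constructor
  · intro β1 hβ1 β2 hβ2 y1 hy1
    unfold totalUtility
    split_ifs with hle
    · -- case β1 ≤ β2
      set c := Real.sqrt (2 * y1 / (β1 + β2)) with hc
      have hcpos : 0 < c := Real.sqrt_pos.mpr
        (div_pos (by linarith) (by linarith [hβ1.1, hβ2.1]))
      simp only [mul_assoc]
      calc (∫ n in Set.Ioc (0:ℝ) c, (β1 - β1 ^ 2 / 2) * (n ^ 2 * f n))
            + ∫ n in Set.Ioi c, (β2 - β2 ^ 2 / 2) * (n ^ 2 * f n)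
          ≤ (∫ n in Set.Ioc (0:ℝ) c, (1/2 : ℝ) * (n ^ 2 * f n))
            + ∫ n in Set.Ioi c, (1/2 : ℝ) * (n ^ 2 * f n) := by
            gcongr ?_ + ?_
            · exact MeasureTheory.setIntegral_mono_on
                ((hintc β1).mono_set Set.Ioc_subset_Ioi_self)
                (hhalf.mono_set Set.Ioc_subset_Ioi_self) measurableSet_Ioc
                (fun n hn => hpw β1 n hn.1)
            · exact MeasureTheory.setIntegral_mono_on
                ((hintc β2).mono_set (Set.Ioi_subset_Ioi hcpos.le))
                (hhalf.mono_set (Set.Ioi_subset_Ioi hcpos.le)) measurableSet_Ioi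
                (fun n hn => hpw β2 n (lt_trans hcpos hn))
        _ = ∫ n in Set.Ioi (0:ℝ), (1/2 : ℝ) * (n ^ 2 * f n) := split2 hcpos hhalf
        _ = (1/2 : ℝ) * ∫ n in Set.Ioi (0:ℝ), n ^ 2 * f n := hhalfI
    · -- case β2 < β1
      have hβ2β1 : β2 < β1 := lt_of_not_ge hle
      set a := Real.sqrt (y1 / β1) with ha
      set b := Real.sqrt (y1 / β2) with hb
      have hapos : 0 < a := Real.sqrt_pos.mpr (div_pos hy1 hβ1.1)
      have hab : a ≤ b := Real.sqrt_le_sqrt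
        (div_le_div_of_nonneg_left hy1.le hβ2.1 hβ2β1.le)
      have hbpos : 0 < b := lt_of_lt_of_le hapos hab
      -- middle integrand: integrability and pointwise bound
      have hsub : Set.Icc a b ⊆ Set.Ioi (0:ℝ) := fun x hx => lt_of_lt_of_le hapos hx.1
      have hcontmid : ContinuousOn (fun n => (y1 - y1 ^ 2 / (2 * n ^ 2)) * f n)
          (Set.Icc a b) := by
        apply ContinuousOn.mul _ (hf_cont.mono hsub)
        apply continuousOn_const.sub
        apply ContinuousOn.div continuousOn_const
          ((continuous_const.mul (continuous_pow 2)).continuousOn)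
        intro x hx
        have hx0 : (0:ℝ) < x := hsub hx
        show (2:ℝ) * x ^ 2 ≠ 0
        positivity
      have hintmid : IntegrableOn (fun n => (y1 - y1 ^ 2 / (2 * n ^ 2)) * f n)
          (Set.Ioc a b) :=
        (hcontmid.integrableOn_Icc).mono_set Set.Ioc_subset_Icc_self
      have hpwmid : ∀ n ∈ Set.Ioc a b,
          (y1 - y1 ^ 2 / (2 * n ^ 2)) * f n ≤ (1/2 : ℝ) * (n ^ 2 * f n) := by
        intro n hn
        have hn0 : (0:ℝ) < n := lt_of_lt_of_le hapos hn.1.le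
        have hbnd : y1 - y1 ^ 2 / (2 * n ^ 2) ≤ 1/2 * n ^ 2 := by
          rw [← sub_nonneg]
          have heq : 1/2 * n ^ 2 - (y1 - y1 ^ 2 / (2 * n ^ 2))
              = (n ^ 2 - y1) ^ 2 / (2 * n ^ 2) := by
            field_simp
            ring
          rw [heq]; positivity
        calc (y1 - y1 ^ 2 / (2 * n ^ 2)) * f n ≤ (1/2 * n ^ 2) * f n :=
              mul_le_mul_of_nonneg_right hbnd (hf_nonneg n hn0)
          _ = (1/2 : ℝ) * (n ^ 2 * f n) := by ring
      simp only [mul_assoc]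
      calc (∫ n in Set.Ioc (0:ℝ) a, (β1 - β1 ^ 2 / 2) * (n ^ 2 * f n))
            + (∫ n in Set.Ioc a b, (y1 - y1 ^ 2 / (2 * n ^ 2)) * f n)
            + ∫ n in Set.Ioi b, (β2 - β2 ^ 2 / 2) * (n ^ 2 * f n)
          ≤ (∫ n in Set.Ioc (0:ℝ) a, (1/2 : ℝ) * (n ^ 2 * f n))
            + (∫ n in Set.Ioc a b, (1/2 : ℝ) * (n ^ 2 * f n))
            + ∫ n in Set.Ioi b, (1/2 : ℝ) * (n ^ 2 * f n) := by
            gcongr ?_ + ?_ + ?_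
            · exact MeasureTheory.setIntegral_mono_on
                ((hintc β1).mono_set Set.Ioc_subset_Ioi_self)
                (hhalf.mono_set Set.Ioc_subset_Ioi_self) measurableSet_Ioc
                (fun n hn => hpw β1 n hn.1)
            · exact MeasureTheory.setIntegral_mono_on hintmid
                (hhalf.mono_set (fun x hx => lt_of_lt_of_le hapos hx.1.le))
                measurableSet_Ioc hpwmid
            · exact MeasureTheory.setIntegral_mono_on
                ((hintc β2).mono_set (Set.Ioi_subset_Ioi hbpos.le))
                (hhalf.mono_set (Set.Ioi_subset_Ioi hbpos.le)) measurableSet_Ioi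
                (fun n hn => hpw β2 n (lt_trans hbpos hn))
        _ = ∫ n in Set.Ioi (0:ℝ), (1/2 : ℝ) * (n ^ 2 * f n) := split3 hapos hab hhalf
        _ = (1/2 : ℝ) * ∫ n in Set.Ioi (0:ℝ), n ^ 2 * f n := hhalfI
  · intro y1 hy1
    unfold totalUtility
    rw [if_pos le_rfl]
    set c := Real.sqrt (2 * y1 / (1 + 1)) with hc
    have hcpos : 0 < c := Real.sqrt_pos.mpr (by norm_num; exact hy1)
    have h1 : ∀ n : ℝ, ((1:ℝ) - 1 ^ 2 / 2) * n ^ 2 * f n = (1/2 : ℝ) * (n ^ 2 * f n) := by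
      intro n; ring
    simp only [h1]
    rw [split2 hcpos hhalf, hhalfI]
end

section
/- Under the balanced-budget linear tax, set U(β) = β(1 − β/2)·E[N²] and σ_u(β) = (β²/2)·σ(N²), where σ(N²) = √Var(N²). Then for every β ∈ (0,1], the normalized quantities Ũ = U(β)/E[N²] and σ̃ = σ_u(β)/σ(N²) satisfy the efficient-frontier equation 2σ̃ = (σ̃ + Ũ)². -/
open MeasureTheory Set

/-- Under the balanced-budget linear tax, with `U(β) = β (1 - β/2) E[N²]` and
`σ_u(β) = (β²/2) σ(N²)`, the normalized quantities `Ũ = U(β)/E[N²]` and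
`σ̃ = σ_u(β)/σ(N²)` satisfy the efficient-frontier equation `2 σ̃ = (σ̃ + Ũ)²`. -/
theorem stmt15 (M s β : ℝ) (hM : 0 < M) (hs : 0 < s) (hβ : β ∈ Set.Ioc (0:ℝ) 1) :
    2 * ((β ^ 2 / 2 * s) / s) = ((β ^ 2 / 2 * s) / s + (β * (1 - β / 2) * M) / M) ^ 2 := by
  field_simp
  ring
end

section
/- For the logarithmic utility u(c,l) = ln(c) + A·ln(1 − l) with A > 0 under the linear tax with α > 0, β ∈ (0,1), and with the skill N uniformly distributed on [0, s] (s > α/(Aβ)), the balanced-budget condition E[t(N·l_max(N))] = 0 holds if and only if α/(βs) = (A/(1−β))·(1 + Aβ − √((A+1)β(2 + (A−1)β))). -/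
open MeasureTheory Set

noncomputable def ltax (α β y : ℝ) : ℝ := -α + (1 - β) * y

lemma lin_integral (a b c d : ℝ) :
    ∫ n in a..b, (c * n + d) = c * (b ^ 2 - a ^ 2) / 2 + d * (b - a) := by
  have hc : Continuous fun n : ℝ => c * n := by continuity
  rw [intervalIntegral.integral_add (hc.intervalIntegrable a b)
    intervalIntegrable_const, intervalIntegral.integral_const_mul, integral_id,
    intervalIntegral.integral_const]
  simp [smul_eq_mul]
  ring

set_option maxHeartbeats 1600000 in
/-- For the logarithmic utility `u(c,l) = ln c + A ln(1-l)` under the linear tax, with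
the skill `N` uniform on `[0,s]` (`s > α/(Aβ)`) and the optimal efforts `l_max`, the
balanced-budget condition `E[t(N l_max(N))] = 0` holds iff
`α/(βs) = (A/(1-β)) (1 + Aβ - √((A+1) β (2 + (A-1) β)))`. -/
theorem stmt19 (A α β s : ℝ) (lmax : ℝ → ℝ)
    (hA : 0 < A) (hα : 0 < α) (hβ : β ∈ Set.Ioo (0:ℝ) 1)
    (hs : α / (A * β) < s)
    (hl : ∀ n, lmax n =
      if α / (A * β) ≤ n then (A * β * n - α) / ((A + 1) * β * n) else 0) :
    ((∫ n in Set.Ioc (0:ℝ) s, ltax α β (n * lmax n)) / s = 0 ↔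
      α / (β * s) = A / (1 - β)
        * (1 + A * β - Real.sqrt ((A + 1) * β * (2 + (A - 1) * β)))) := by
  obtain ⟨hβ0, hβ1⟩ := hβ
  have hAβ : 0 < A * β := mul_pos hA hβ0
  have hn0 : 0 < α / (A * β) := div_pos hα hAβ
  have hs0 : 0 < s := hn0.trans hs
  have h1β : 0 < 1 - β := by linarith
  have hA1 : 0 < A + 1 := by linarith
  set n0 : ℝ := α / (A * β) with hn0def
  -- continuous version of the integrand
  set g : ℝ → ℝ := fun n => -α + (1 - β) * (max (A * β * n - α) 0 / ((A + 1) * β)) with hg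
  have hαn0 : A * β * n0 = α := by rw [hn0def]; field_simp
  have hpt : ∀ n ∈ Set.Ioc (0:ℝ) s, ltax α β (n * lmax n) = g n := by
    intro n hn
    rw [hl n]
    by_cases h : n0 ≤ n
    · have hge : 0 ≤ A * β * n - α := by nlinarith [(div_le_iff₀ hAβ).mp h]
      simp only [hg, h, if_true, ltax, max_eq_left hge]
      have hne : n ≠ 0 := ne_of_gt hn.1
      field_simp
    · have hlt : A * β * n - α < 0 := by nlinarith [(lt_div_iff₀ hAβ).mp (lt_of_not_ge h)]
      simp [hg, h, ltax, max_eq_right hlt.le]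
  have hgc : Continuous g := by
    apply continuous_const.add
    apply continuous_const.mul
    exact (((continuous_const.mul continuous_id).sub continuous_const).max continuous_const).div_const _
  have hI : (∫ n in Set.Ioc (0:ℝ) s, ltax α β (n * lmax n)) =
      -α * n0 + ((1 - β) * (A * β) / ((A + 1) * β) * (s ^ 2 - n0 ^ 2) / 2
        + (-α - (1 - β) * α / ((A + 1) * β)) * (s - n0)) := by
    rw [setIntegral_congr_fun measurableSet_Ioc hpt,
      ← intervalIntegral.integral_of_le hs0.le,
      ← intervalIntegral.integral_add_adjacent_intervals
        (hgc.intervalIntegrable 0 n0) (hgc.intervalIntegrable n0 s)]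
    have h1 : ∫ n in (0:ℝ)..n0, g n = -α * n0 := by
      rw [intervalIntegral.integral_congr (g := fun _ => -α)
        (fun n hn => ?_), intervalIntegral.integral_const]
      · simp [smul_eq_mul]; ring
      · rw [Set.uIcc_of_le hn0.le] at hn
        have : A * β * n - α ≤ 0 := by nlinarith [hn.2]
        simp [hg, max_eq_right this]
    have h2 : ∫ n in n0..s, g n =
        (1 - β) * (A * β) / ((A + 1) * β) * (s ^ 2 - n0 ^ 2) / 2
        + (-α - (1 - β) * α / ((A + 1) * β)) * (s - n0) := by
      rw [intervalIntegral.integral_congr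
        (g := fun n => ((1 - β) * (A * β) / ((A + 1) * β)) * n
          + (-α - (1 - β) * α / ((A + 1) * β))) (fun n hn => ?_), lin_integral]
      rw [Set.uIcc_of_le hs.le] at hn
      have : 0 ≤ A * β * n - α := by nlinarith [hn.1]
      simp only [hg, max_eq_left this]
      field_simp
      ring
    rw [h1, h2]
  set D : ℝ := (A + 1) * β * (2 + (A - 1) * β) with hD
  set t : ℝ := 1 + A * β - (1 - β) * (α / (A * β * s)) with ht
  have hDpos : 0 < D := by nlinarith
  have hu1 : α / (A * β * s) < 1 := by
    rw [div_lt_one (by positivity)]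
    nlinarith [(div_lt_iff₀ hAβ).mp hs]
  have htpos : 0 < t := by
    have : (1 - β) * (α / (A * β * s)) < 1 - β := by
      nlinarith [div_pos hα (mul_pos hAβ hs0)]
    simp only [ht]; nlinarith
  have hfac : (∫ n in Set.Ioc (0:ℝ) s, ltax α β (n * lmax n)) =
      A * s ^ 2 / (2 * (A + 1) * (1 - β)) * (t ^ 2 - D) := by
    rw [hI]
    simp only [ht, hD, hn0def]
    field_simp
    ring
  rw [hfac, div_eq_zero_iff]
  have hC : A * s ^ 2 / (2 * (A + 1) * (1 - β)) ≠ 0 := by positivity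
  set r : ℝ := Real.sqrt D with hr
  have hr2 : r ^ 2 = D := Real.sq_sqrt hDpos.le
  have hrnn : 0 ≤ r := Real.sqrt_nonneg _
  clear_value n0 g D t r
  clear hl hpt hgc hI hfac hg hr hD hαn0
  constructor
  · rintro (h | h)
    · have h2 : t ^ 2 = D := by
        rcases mul_eq_zero.mp h with h' | h'
        · exact absurd h' hC
        · linarith [sub_eq_zero.mp h']
      have hz : (r - t) * (r + t) = 0 := by linear_combination hr2 - h2
      have hrt : r = t := by
        rcases mul_eq_zero.mp hz with h' | h'
        · linarith
        · linarith
      rw [hrt]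
      simp only [ht]
      field_simp
      ring
    · exact absurd h (ne_of_gt hs0)
  · intro h
    left
    have e1 : A * ((1 - β) * (α / (A * β * s))) = (1 - β) * (α / (β * s)) := by
      field_simp
    have e2 : (1 - β) * (A / (1 - β)) = A := by field_simp
    have key : A * ((1 - β) * (α / (A * β * s))) = A * (1 + A * β - r) := by
      rw [e1, h, ← mul_assoc, e2]
    have hu' := mul_left_cancel₀ (ne_of_gt hA) key
    have hrt : r = t := by simp only [ht]; linarith
    have hz : t ^ 2 - D = 0 := by rw [← hrt, hr2]; ring
    rw [hz, mul_zero]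
end
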